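/- Assume additionally b₁ ≠ 0. Then Σ_{ℓ=0}^{ℓ₁^{(r)}} p₂^{(r)}(ℓ) → 0 as r ↓ 0; that is, the total stationary probability of the phase in which the second arrival rate is active while the queue length is at or below the threshold vanishes in the heavy-traffic limit. -/

import Mathlib

lemma sumA_aux {a c : ℝ} {q : ℕ → ℝ} {L : ℕ} (ha : 0 < a) (hc : 0 < c)
    (hq : ∀ ℓ ≤ L, 0 < q ℓ)
    (h0 : a * q 0 = c * q 1)
    (h5 : ∀ ℓ, 1 ≤ ℓ → ℓ ≤ L - 1 → (a + c) * q ℓ = c * q (ℓ + 1)) :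
    ∀ n, 1 ≤ n → n ≤ L →
      a * (∑ ℓ ∈ Finset.range (n + 1), q ℓ) ≤ (a + 2 * c) * q n := by
  intro n
  induction n with
  | zero => intro h; omega
  | succ m ih =>
    intro _ hle
    rcases Nat.eq_zero_or_pos m with rfl | hm
    · have hq1 : 0 < q 1 := hq 1 hle
      norm_num [Finset.sum_range_succ]
      nlinarith [mul_pos hc hq1]
    · have hmL : m ≤ L - 1 := by omega
      have hrec := h5 m hm hmL
      have hih := ih hm (by omega)
      have hqm : 0 < q m := hq m (by omega)
      rw [Finset.sum_range_succ]
      nlinarith [mul_pos ha hqm]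

lemma keybound {a c d : ℝ} {L : ℕ} {q e : ℕ → ℝ} {S1 : ℝ}
    (ha : 0 < a) (hc : 0 < c) (hd : 0 < d) (had : a < d) (hL : 1 ≤ L)
    (hq : ∀ ℓ ≤ L, 0 < q ℓ)
    (h0 : a * q 0 = c * q 1)
    (h5 : ∀ ℓ, 1 ≤ ℓ → ℓ ≤ L - 1 → (a + c) * q ℓ = c * q (ℓ + 1))
    (h6 : (a + c) * q L = d * e (L + 1))
    (h8 : ∀ ℓ, L + 1 ≤ ℓ → a * e ℓ = d * e (ℓ + 1))
    (hS1 : 0 ≤ S1)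
    (hnorm : S1 + (∑ ℓ ∈ Finset.range (L + 1), q ℓ) + (∑' n : ℕ, e (L + 1 + n)) = 1) :
    (∑ ℓ ∈ Finset.range (L + 1), q ℓ) ≤ (a + 2 * c) * (d - a) / a ^ 2 := by
  have hgeo : ∀ n : ℕ, e (L + 1 + n) = (a / d) ^ n * e (L + 1) := by
    intro n
    induction n with
    | zero => simp
    | succ m ihm =>
      have hb := h8 (L + 1 + m) (by omega)
      have hstep : e (L + 1 + (m + 1)) = (a / d) * e (L + 1 + m) := by
        have harr : L + 1 + (m + 1) = (L + 1 + m) + 1 := by omega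
        rw [harr, eq_comm, div_mul_eq_mul_div, div_eq_iff hd.ne']
        linarith
      rw [hstep, ihm, pow_succ]
      ring
  have hs0 : (0:ℝ) ≤ a / d := le_of_lt (div_pos ha hd)
  have hs1 : a / d < 1 := (div_lt_one hd).2 had
  have hT : (∑' n : ℕ, e (L + 1 + n)) = (1 - a / d)⁻¹ * e (L + 1) := by
    rw [tsum_congr hgeo, tsum_mul_right, tsum_geometric_of_lt_one hs0 hs1]
  have hS2 : (0:ℝ) ≤ ∑ ℓ ∈ Finset.range (L + 1), q ℓ :=
    Finset.sum_nonneg fun ℓ hℓ => (hq ℓ (Nat.lt_succ_iff.mp (Finset.mem_range.mp hℓ))).le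
  have hTle : (∑' n : ℕ, e (L + 1 + n)) ≤ 1 := by linarith
  have h1s : 0 < 1 - a / d := by linarith
  have heL : e (L + 1) ≤ 1 - a / d := by
    have he : e (L + 1) = (1 - a / d) * ((1 - a / d)⁻¹ * e (L + 1)) := by
      rw [← mul_assoc, mul_inv_cancel₀ h1s.ne', one_mul]
    calc e (L + 1) = (1 - a / d) * ((1 - a / d)⁻¹ * e (L + 1)) := he
      _ ≤ (1 - a / d) * 1 := by
          rw [← hT]; exact mul_le_mul_of_nonneg_left hTle h1s.le
      _ = 1 - a / d := mul_one _
  have hdeL : d * e (L + 1) ≤ d - a := by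
    have h := mul_le_mul_of_nonneg_left heL hd.le
    have hdd : d * (1 - a / d) = d - a := by field_simp
    linarith [hdd ▸ h]
  have hqL : 0 < q L := hq L le_rfl
  have haqL : a * q L ≤ d - a := by nlinarith [mul_pos hc hqL]
  have hsum := sumA_aux ha hc hq h0 h5 L hL le_rfl
  rw [le_div_iff₀ (by positivity)]
  have e1 : a * (a * (∑ ℓ ∈ Finset.range (L + 1), q ℓ)) ≤ a * ((a + 2 * c) * q L) :=
    mul_le_mul_of_nonneg_left hsum ha.le
  have e2 : (a + 2 * c) * (a * q L) ≤ (a + 2 * c) * (d - a) :=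
    mul_le_mul_of_nonneg_left haqL (by positivity)
  calc (∑ ℓ ∈ Finset.range (L + 1), q ℓ) * a ^ 2
      = a * (a * (∑ ℓ ∈ Finset.range (L + 1), q ℓ)) := by ring
    _ ≤ a * ((a + 2 * c) * q L) := e1
    _ = (a + 2 * c) * (a * q L) := by ring
    _ ≤ (a + 2 * c) * (d - a) := e2

theorem stmt16
    (lam1 lam2 c1 c2 mu : ℝ → ℝ) (ell : ℝ → ℕ) (p1 p2 p3 : ℝ → ℕ → ℝ)
    (lam1L lam2L c1L c2L muL b1 b2 ℓ₁ β1 β2 : ℝ)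
    (hpos : ∀ r ∈ Set.Ioc (0:ℝ) 1,
      0 < lam1 r ∧ 0 < lam2 r ∧ 0 < c1 r ∧ 0 < c2 r ∧ 0 < mu r ∧ 1 ≤ ell r)
    (hp1pos : ∀ r ∈ Set.Ioc (0:ℝ) 1, ∀ ℓ ≤ ell r, 0 < p1 r ℓ)
    (hp2pos : ∀ r ∈ Set.Ioc (0:ℝ) 1, ∀ ℓ ≤ ell r, 0 < p2 r ℓ)
    (hp3pos : ∀ r ∈ Set.Ioc (0:ℝ) 1, ∀ ℓ, ell r + 1 ≤ ℓ → 0 < p3 r ℓ)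
    (hbal1 : ∀ r ∈ Set.Ioc (0:ℝ) 1, lam1 r * p1 r 0 = c1 r * mu r * p1 r 1)
    (hbal2 : ∀ r ∈ Set.Ioc (0:ℝ) 1, ∀ ℓ, 1 ≤ ℓ → ℓ ≤ ell r - 1 →
      (lam1 r + c1 r * mu r) * p1 r ℓ
        = lam1 r * p1 r (ℓ - 1) + c1 r * mu r * p1 r (ℓ + 1) + lam2 r * p2 r (ℓ - 1))
    (hbal3 : ∀ r ∈ Set.Ioc (0:ℝ) 1,
      (lam1 r + c1 r * mu r) * p1 r (ell r)
        = lam1 r * p1 r (ell r - 1) + lam2 r * p2 r (ell r - 1))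
    (hbal4 : ∀ r ∈ Set.Ioc (0:ℝ) 1, lam2 r * p2 r 0 = c1 r * mu r * p2 r 1)
    (hbal5 : ∀ r ∈ Set.Ioc (0:ℝ) 1, ∀ ℓ, 1 ≤ ℓ → ℓ ≤ ell r - 1 →
      (lam2 r + c1 r * mu r) * p2 r ℓ = c1 r * mu r * p2 r (ℓ + 1))
    (hbal6 : ∀ r ∈ Set.Ioc (0:ℝ) 1,
      (lam2 r + c1 r * mu r) * p2 r (ell r) = c2 r * mu r * p3 r (ell r + 1))
    (hbal7 : ∀ r ∈ Set.Ioc (0:ℝ) 1,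
      (lam2 r + c2 r * mu r) * p3 r (ell r + 1)
        = lam1 r * p1 r (ell r) + lam2 r * p2 r (ell r) + c2 r * mu r * p3 r (ell r + 2))
    (hbal8 : ∀ r ∈ Set.Ioc (0:ℝ) 1, ∀ ℓ, ell r + 1 ≤ ℓ →
      lam2 r * p3 r ℓ = c2 r * mu r * p3 r (ℓ + 1))
    (hnorm : ∀ r ∈ Set.Ioc (0:ℝ) 1,
      (∑ ℓ ∈ Finset.range (ell r + 1), p1 r ℓ)
        + (∑ ℓ ∈ Finset.range (ell r + 1), p2 r ℓ)
        + (∑' n : ℕ, p3 r (ell r + 1 + n)) = 1)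
    (hstable : ∀ r ∈ Set.Ioc (0:ℝ) 1, lam2 r < c2 r * mu r)
    (hlam1lim : Filter.Tendsto lam1 (nhdsWithin 0 (Set.Ioi 0)) (nhds lam1L))
    (hlam2lim : Filter.Tendsto lam2 (nhdsWithin 0 (Set.Ioi 0)) (nhds lam2L))
    (hc1lim : Filter.Tendsto c1 (nhdsWithin 0 (Set.Ioi 0)) (nhds c1L))
    (hc2lim : Filter.Tendsto c2 (nhdsWithin 0 (Set.Ioi 0)) (nhds c2L))
    (hmulim : Filter.Tendsto mu (nhdsWithin 0 (Set.Ioi 0)) (nhds muL))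
    (hlam1L : 0 < lam1L) (hlam2L : 0 < lam2L) (hc1L : 0 < c1L) (hc2L : 0 < c2L)
    (hmuL : 0 < muL)
    (hhv1 : Filter.Tendsto (fun r => (c1 r * mu r - lam1 r - r * mu r * b1) / r)
      (nhdsWithin 0 (Set.Ioi 0)) (nhds 0))
    (hhv2 : Filter.Tendsto (fun r => (c2 r * mu r - lam2 r - r * mu r * b2) / r)
      (nhdsWithin 0 (Set.Ioi 0)) (nhds 0))
    (hb2 : 0 < b2)
    (helllim : Filter.Tendsto (fun r => (r * (ell r : ℝ) - ℓ₁) / r)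
      (nhdsWithin 0 (Set.Ioi 0)) (nhds 0))
    (hℓ₁ : 0 < ℓ₁)
    (hβ1 : β1 = b1 / c1L) (hβ2 : β2 = b2 / c2L)
    (hb1 : b1 ≠ 0) :
    Filter.Tendsto (fun r => ∑ ℓ ∈ Finset.range (ell r + 1), p2 r ℓ)
      (nhdsWithin 0 (Set.Ioi 0)) (nhds 0) := by
  have hmem : Set.Ioc (0:ℝ) 1 ∈ nhdsWithin (0:ℝ) (Set.Ioi 0) :=
    Ioc_mem_nhdsGT_of_mem (by norm_num)
  have key : ∀ r ∈ Set.Ioc (0:ℝ) 1,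
      (∑ ℓ ∈ Finset.range (ell r + 1), p2 r ℓ)
        ≤ (lam2 r + 2 * (c1 r * mu r)) * (c2 r * mu r - lam2 r) / (lam2 r) ^ 2 := by
    intro r hr
    obtain ⟨h1, h2, h3, h4, h5p, h6⟩ := hpos r hr
    have hS1 : (0:ℝ) ≤ ∑ ℓ ∈ Finset.range (ell r + 1), p1 r ℓ :=
      Finset.sum_nonneg fun ℓ hℓ =>
        (hp1pos r hr ℓ (Nat.lt_succ_iff.mp (Finset.mem_range.mp hℓ))).le
    exact keybound h2 (mul_pos h3 h5p) (mul_pos h4 h5p) (hstable r hr) h6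
      (hp2pos r hr) (hbal4 r hr) (hbal5 r hr) (hbal6 r hr) (hbal8 r hr)
      hS1 (hnorm r hr)
  have hrid : Filter.Tendsto (fun r : ℝ => r) (nhdsWithin 0 (Set.Ioi 0)) (nhds 0) :=
    Filter.Tendsto.mono_left Filter.tendsto_id nhdsWithin_le_nhds
  have hdiff : Filter.Tendsto (fun r => c2 r * mu r - lam2 r)
      (nhdsWithin 0 (Set.Ioi 0)) (nhds 0) := by
    have haux : Filter.Tendsto
        (fun r => r * ((c2 r * mu r - lam2 r - r * mu r * b2) / r) + r * mu r * b2)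
        (nhdsWithin 0 (Set.Ioi 0)) (nhds (0 * 0 + 0 * muL * b2)) :=
      (hrid.mul hhv2).add ((hrid.mul hmulim).mul tendsto_const_nhds)
    have haux' : Filter.Tendsto
        (fun r => r * ((c2 r * mu r - lam2 r - r * mu r * b2) / r) + r * mu r * b2)
        (nhdsWithin 0 (Set.Ioi 0)) (nhds 0) := by simpa using haux
    refine haux'.congr' ?_
    filter_upwards [self_mem_nhdsWithin] with r hrr
    have hr0 : (r:ℝ) ≠ 0 := ne_of_gt hrr
    field_simp
    ring
  have hglim : Filter.Tendsto
      (fun r => (lam2 r + 2 * (c1 r * mu r)) * (c2 r * mu r - lam2 r) / (lam2 r) ^ 2)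
      (nhdsWithin 0 (Set.Ioi 0)) (nhds 0) := by
    have hnum : Filter.Tendsto
        (fun r => (lam2 r + 2 * (c1 r * mu r)) * (c2 r * mu r - lam2 r))
        (nhdsWithin 0 (Set.Ioi 0)) (nhds ((lam2L + 2 * (c1L * muL)) * 0)) :=
      (hlam2lim.add ((hc1lim.mul hmulim).const_mul 2)).mul hdiff
    have hden : Filter.Tendsto (fun r => (lam2 r) ^ 2)
        (nhdsWithin 0 (Set.Ioi 0)) (nhds (lam2L ^ 2)) := hlam2lim.pow 2
    have hq := hnum.div hden (by positivity)
    simpa [Pi.div_def] using hq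
  refine squeeze_zero' ?_ ?_ hglim
  · filter_upwards [hmem] with r hr
    exact Finset.sum_nonneg fun ℓ hℓ =>
      (hp2pos r hr ℓ (Nat.lt_succ_iff.mp (Finset.mem_range.mp hℓ))).le
  · filter_upwards [hmem] with r hr
    exact key r hr
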